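/- arXiv:2109.04495 — 6 statements merged into one kernel-verified Lean document; each statement's English description precedes it below -/
import Mathlib

section
/- For integers n ≥ 3, the function i ↦ 1/(sin(πi/n)·csc(π(i+1)/n) + 1) is strictly decreasing on real i ∈ [0, n/2 - 1]; in particular, for integers 0 ≤ i < j ≤ ⌊n/2⌋ - 1, the slope v_i/h_i of the diagonal ν_i exceeds v_j/h_j. -/
open Real

private lemma stmt7_sinA_pos (n : ℕ) (hn : 3 ≤ n) {x : ℝ} (hx0 : 0 ≤ x)
    (hx1 : x ≤ (n : ℝ) / 2 - 1) : 0 < Real.sin (π * (x + 1) / n) := by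
  have hn0 : (0:ℝ) < n := by exact_mod_cast Nat.pos_of_ne_zero (by omega)
  have hpi := Real.pi_pos
  apply Real.sin_pos_of_pos_of_lt_pi
  · positivity
  · rw [div_lt_iff₀ hn0]
    nlinarith

private lemma stmt7_sinB_nonneg (n : ℕ) (hn : 3 ≤ n) {x : ℝ} (hx0 : 0 ≤ x)
    (hx1 : x ≤ (n : ℝ) / 2 - 1) : 0 ≤ Real.sin (π * x / n) := by
  have hn0 : (0:ℝ) < n := by exact_mod_cast Nat.pos_of_ne_zero (by omega)
  have hpi := Real.pi_pos
  apply Real.sin_nonneg_of_nonneg_of_le_pi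
  · positivity
  · rw [div_le_iff₀ hn0]
    nlinarith

private lemma stmt7_anti (n : ℕ) (hn : 3 ≤ n) :
    StrictAntiOn
      (fun i : ℝ => 1 / (Real.sin (π * i / n) * (Real.sin (π * (i + 1) / n))⁻¹ + 1))
      (Set.Icc 0 ((n : ℝ) / 2 - 1)) := by
  have hn0 : (0:ℝ) < n := by exact_mod_cast Nat.pos_of_ne_zero (by omega)
  have hpi := Real.pi_pos
  intro x hx y hy hxy
  obtain ⟨hx0, hx1⟩ := hx
  obtain ⟨hy0, hy1⟩ := hy
  have hsx1 : 0 < Real.sin (π * (x + 1) / n) := stmt7_sinA_pos n hn hx0 hx1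
  have hsy1 : 0 < Real.sin (π * (y + 1) / n) := stmt7_sinA_pos n hn hy0 hy1
  have hsx0 : 0 ≤ Real.sin (π * x / n) := stmt7_sinB_nonneg n hn hx0 hx1
  have hsy0 : 0 ≤ Real.sin (π * y / n) := stmt7_sinB_nonneg n hn hy0 hy1
  have key : Real.sin (π * x / n) * Real.sin (π * (y + 1) / n)
      < Real.sin (π * y / n) * Real.sin (π * (x + 1) / n) := by
    have prod : ∀ A B : ℝ, 2 * (Real.sin A * Real.sin B)
        = Real.cos (A - B) - Real.cos (A + B) := by
      intro A B; rw [Real.cos_sub, Real.cos_add]; ring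
    have e1 := prod (π * x / n) (π * (y + 1) / n)
    have e2 := prod (π * y / n) (π * (x + 1) / n)
    have harg1 : π * x / n - π * (y + 1) / n = -(π * (y - x + 1) / n) := by ring
    have harg2 : π * y / n - π * (x + 1) / n = π * (y - x - 1) / n := by ring
    have harg3 : π * x / n + π * (y + 1) / n = π * (x + y + 1) / n := by ring
    have harg4 : π * y / n + π * (x + 1) / n = π * (x + y + 1) / n := by ring
    rw [harg1, harg3, Real.cos_neg] at e1
    rw [harg2, harg4] at e2
    have hcos : Real.cos (π * (y - x + 1) / n) < Real.cos (π * (y - x - 1) / n) := by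
      have habs : Real.cos (π * (y - x - 1) / n) = Real.cos (π * |y - x - 1| / n) := by
        rcases abs_cases (y - x - 1) with ⟨h, _⟩ | ⟨h, _⟩
        · rw [h]
        · rw [h, show π * -(y - x - 1) / n = -(π * (y - x - 1) / n) by ring, Real.cos_neg]
      rw [habs]
      apply Real.cos_lt_cos_of_nonneg_of_le_pi
      · positivity
      · rw [div_le_iff₀ hn0]; nlinarith
      · have habs2 : |y - x - 1| < y - x + 1 := by
          rw [abs_lt]; constructor <;> nlinarith
        exact div_lt_div_of_pos_right (by nlinarith) hn0
    linarith
  have h1 : Real.sin (π * x / n) * (Real.sin (π * (x + 1) / n))⁻¹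
      < Real.sin (π * y / n) * (Real.sin (π * (y + 1) / n))⁻¹ := by
    rw [← div_eq_mul_inv, ← div_eq_mul_inv, div_lt_div_iff₀ hsx1 hsy1]
    exact key
  have hposx : 0 < Real.sin (π * x / n) * (Real.sin (π * (x + 1) / n))⁻¹ + 1 := by
    have : 0 ≤ Real.sin (π * x / n) * (Real.sin (π * (x + 1) / n))⁻¹ := by positivity
    linarith
  exact one_div_lt_one_div_of_lt hposx (by linarith)

private lemma stmt7_key (n : ℕ) (hn : 3 ≤ n) {i : ℝ} (hi0 : 0 ≤ i)
    (hi1 : i ≤ (n : ℝ) / 2 - 1) :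
    ((Real.sin (π / n))⁻¹ * Real.sin (π * (i + 1) / n)) /
      ((Real.sin (π / (2 * n)))⁻¹ * Real.sin (π * (1 + 2 * i) / (2 * n))) =
    1 / (Real.sin (π * i / n) * (Real.sin (π * (i + 1) / n))⁻¹ + 1) := by
  have hn0 : (0:ℝ) < n := by exact_mod_cast Nat.pos_of_ne_zero (by omega)
  have hn3 : (3:ℝ) ≤ n := by exact_mod_cast hn
  have hpi := Real.pi_pos
  have hsa : 0 < Real.sin (π / (2 * n)) := by
    apply Real.sin_pos_of_pos_of_lt_pi
    · positivity
    · rw [div_lt_iff₀ (by positivity)]; nlinarith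
  have hca : 0 < Real.cos (π / (2 * n)) := by
    apply Real.cos_pos_of_mem_Ioo
    constructor
    · have : 0 < π / (2 * n) := by positivity
      linarith
    · rw [div_lt_div_iff₀ (by positivity) (by norm_num)]; nlinarith
  have hsB : 0 < Real.sin (π * (1 + 2 * i) / (2 * n)) := by
    apply Real.sin_pos_of_pos_of_lt_pi
    · positivity
    · rw [div_lt_iff₀ (by positivity)]; nlinarith
  have hs2 : 0 < Real.sin (π * (i + 1) / n) := stmt7_sinA_pos n hn hi0 hi1
  have hs0 : 0 ≤ Real.sin (π * i / n) := stmt7_sinB_nonneg n hn hi0 hi1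
  have hs2n : Real.sin (π / n) = 2 * Real.sin (π / (2 * n)) * Real.cos (π / (2 * n)) := by
    rw [show π / (n:ℝ) = 2 * (π / (2 * n)) by field_simp]
    rw [Real.sin_two_mul]
  have hsum : Real.sin (π * i / n) + Real.sin (π * (i + 1) / n)
      = 2 * Real.sin (π * (1 + 2 * i) / (2 * n)) * Real.cos (π / (2 * n)) := by
    rw [show π * i / (n:ℝ) = π * (1 + 2 * i) / (2 * n) - π / (2 * n) by field_simp; ring]
    rw [show π * (i + 1) / (n:ℝ) = π * (1 + 2 * i) / (2 * n) + π / (2 * n) by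
      field_simp; ring]
    rw [Real.sin_sub, Real.sin_add]
    ring
  have hden : Real.sin (π * i / n) * (Real.sin (π * (i + 1) / n))⁻¹ + 1
      = (Real.sin (π * i / n) + Real.sin (π * (i + 1) / n)) / Real.sin (π * (i + 1) / n) := by
    field_simp
  rw [hden, hsum, hs2n, one_div_div]
  rw [div_eq_div_iff (by positivity) (by positivity)]
  field_simp

theorem stmt7 (n : ℕ) (hn : 3 ≤ n) :
    StrictAntiOn
      (fun i : ℝ => 1 / (Real.sin (π * i / n) * (Real.sin (π * (i + 1) / n))⁻¹ + 1))
      (Set.Icc 0 ((n : ℝ) / 2 - 1)) ∧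
    ∀ i j : ℕ, i < j → j ≤ n / 2 - 1 →
      ((Real.sin (π / n))⁻¹ * Real.sin (π * ((i : ℝ) + 1) / n)) /
          ((Real.sin (π / (2 * n)))⁻¹ * Real.sin (π * (1 + 2 * (i : ℝ)) / (2 * n))) >
        ((Real.sin (π / n))⁻¹ * Real.sin (π * ((j : ℝ) + 1) / n)) /
          ((Real.sin (π / (2 * n)))⁻¹ * Real.sin (π * (1 + 2 * (j : ℝ)) / (2 * n))) := by
  refine ⟨stmt7_anti n hn, ?_⟩
  intro i j hij hj
  have hj1 : j + 1 ≤ n / 2 := by omega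
  have hfl : ((n / 2 : ℕ) : ℝ) ≤ (n : ℝ) / 2 := by
    rw [le_div_iff₀ (by norm_num : (0:ℝ) < 2)]
    exact_mod_cast Nat.div_mul_le_self n 2
  have hjr : (j : ℝ) ≤ (n : ℝ) / 2 - 1 := by
    have : ((j + 1 : ℕ) : ℝ) ≤ ((n / 2 : ℕ) : ℝ) := by exact_mod_cast hj1
    push_cast at this
    linarith
  have hir : (i : ℝ) ≤ (n : ℝ) / 2 - 1 := by
    have : (i : ℝ) ≤ (j : ℝ) := by exact_mod_cast hij.le
    linarith
  have hi0 : (0:ℝ) ≤ (i : ℝ) := Nat.cast_nonneg i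
  have hj0 : (0:ℝ) ≤ (j : ℝ) := Nat.cast_nonneg j
  rw [stmt7_key n hn hi0 hir, stmt7_key n hn hj0 hjr]
  exact stmt7_anti n hn ⟨hi0, hir⟩ ⟨hj0, hjr⟩ (by exact_mod_cast hij)
end

section
/- For integers n ≥ 3, the function i ↦ 1/(sin(π(i+1)/n)·csc(πi/n) + 1) is strictly increasing on real i ∈ [1, n/2 - 1]; in particular, for integers 1 ≤ i < j ≤ ⌈n/2⌉ - 1, the slope v_{i-1}/h_i of the diagonal σ_i is less than v_{j-1}/h_j. -/
open Real

lemma keyL (a b d : ℝ) (ha : 0 < a) (hab : a < b) (hd : 0 < d) (hbd : b + d ≤ π) :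
    Real.sin (b + d) * Real.sin a < Real.sin (a + d) * Real.sin b := by
  have key : ∀ X Y : ℝ, Real.sin X * Real.sin Y
      = (Real.cos (X - Y) - Real.cos (X + Y)) / 2 := by
    intro X Y; rw [Real.cos_sub, Real.cos_add]; ring
  rw [key, key, show b + d + a = a + d + b from by ring]
  have habs : |a + d - b| < b + d - a := abs_lt.mpr ⟨by linarith, by linarith⟩
  have h1 : Real.cos (b + d - a) < Real.cos (a + d - b) := by
    rw [← Real.cos_abs (a + d - b)]
    exact Real.strictAntiOn_cos ⟨abs_nonneg _, by linarith⟩ ⟨by linarith, by linarith⟩ habs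
  linarith

set_option maxHeartbeats 1600000 in
theorem stmt8 (n : ℕ) (hn : 3 ≤ n) :
    StrictMonoOn
      (fun i : ℝ => 1 / (Real.sin (π * (i + 1) / n) * (Real.sin (π * i / n))⁻¹ + 1))
      (Set.Icc 1 ((n : ℝ) / 2 - 1)) ∧
    ∀ i j : ℕ, 1 ≤ i → i < j → j ≤ (n + 1) / 2 - 1 →
      ((Real.sin (π / n))⁻¹ * Real.sin (π * (i : ℝ) / n)) /
          ((Real.sin (π / (2 * n)))⁻¹ * Real.sin (π * (1 + 2 * (i : ℝ)) / (2 * n))) <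
        ((Real.sin (π / n))⁻¹ * Real.sin (π * (j : ℝ) / n)) /
          ((Real.sin (π / (2 * n)))⁻¹ * Real.sin (π * (1 + 2 * (j : ℝ)) / (2 * n))) := by
  have hn3 : (3 : ℝ) ≤ (n : ℝ) := by exact_mod_cast hn
  have hnpos : (0 : ℝ) < n := by linarith
  constructor
  · intro x hx y hy hxy
    simp only []
    have hx1 : (1 : ℝ) ≤ x := hx.1
    have hy2 : y ≤ (n : ℝ) / 2 - 1 := hy.2
    have ha : 0 < π * x / n := div_pos (mul_pos pi_pos (by linarith)) hnpos
    have hab : π * x / n < π * y / n := by gcongr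
    have hd : 0 < π / n := div_pos pi_pos hnpos
    have hbd : π * y / n + π / n ≤ π := by
      rw [← add_div, div_le_iff₀ hnpos]
      nlinarith [pi_pos]
    have hdx : π * (x + 1) / n = π * x / n + π / n := by ring
    have hdy : π * (y + 1) / n = π * y / n + π / n := by ring
    have hsa : 0 < Real.sin (π * x / n) := Real.sin_pos_of_pos_of_lt_pi ha (by linarith)
    have hsb : 0 < Real.sin (π * y / n) :=
      Real.sin_pos_of_pos_of_lt_pi (by linarith) (by linarith)
    have hsad : 0 < Real.sin (π * x / n + π / n) :=
      Real.sin_pos_of_pos_of_lt_pi (by linarith) (by linarith)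
    have hsbd : 0 ≤ Real.sin (π * y / n + π / n) :=
      Real.sin_nonneg_of_nonneg_of_le_pi (by linarith) hbd
    rw [hdx, hdy]
    have hkey := keyL (π * x / n) (π * y / n) (π / n) ha hab hd hbd
    have h2 : Real.sin (π * y / n + π / n) * (Real.sin (π * y / n))⁻¹
        < Real.sin (π * x / n + π / n) * (Real.sin (π * x / n))⁻¹ := by
      rw [← div_eq_mul_inv, ← div_eq_mul_inv, div_lt_div_iff₀ hsb hsa]
      exact hkey
    have hGy : 0 < Real.sin (π * y / n + π / n) * (Real.sin (π * y / n))⁻¹ + 1 := by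
      positivity
    exact div_lt_div_of_pos_left one_pos hGy (by linarith)
  · intro i j hi hij hj
    have h2j : 2 * j + 1 ≤ n := by omega
    have hi1 : (1 : ℝ) ≤ (i : ℝ) := by exact_mod_cast hi
    have hijR : (i : ℝ) < (j : ℝ) := by exact_mod_cast hij
    have h2jR : 2 * (j : ℝ) + 1 ≤ (n : ℝ) := by exact_mod_cast h2j
    have hd : 0 < π / (2 * n) := by positivity
    have hdi : π * (1 + 2 * (i : ℝ)) / (2 * n) = π * i / n + π / (2 * n) := by
      field_simp; ring
    have hdj : π * (1 + 2 * (j : ℝ)) / (2 * n) = π * j / n + π / (2 * n) := by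
      field_simp; ring
    have ha : 0 < π * i / n := div_pos (mul_pos pi_pos (by linarith)) hnpos
    have hab : π * i / n < π * j / n := by gcongr
    have hbd2 : π * j / n + π / (2 * n) ≤ π / 2 := by
      have heq : π * j / n + π / (2 * n) = π * (2 * j + 1) / (2 * n) := by
        field_simp
      rw [heq, div_le_div_iff₀ (by positivity) (by norm_num : (0:ℝ) < 2)]
      nlinarith [pi_pos]
    have hbd : π * j / n + π / (2 * n) ≤ π := by linarith [pi_pos]
    have hsa : 0 < Real.sin (π * i / n) :=
      Real.sin_pos_of_pos_of_lt_pi ha (by linarith [pi_pos])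
    have hsb : 0 < Real.sin (π * j / n) :=
      Real.sin_pos_of_pos_of_lt_pi (by linarith) (by linarith [pi_pos])
    have hsad : 0 < Real.sin (π * i / n + π / (2 * n)) :=
      Real.sin_pos_of_pos_of_lt_pi (by linarith) (by linarith [pi_pos])
    have hsbd : 0 < Real.sin (π * j / n + π / (2 * n)) :=
      Real.sin_pos_of_pos_of_lt_pi (by linarith) (by linarith [pi_pos])
    have hA : 0 < (Real.sin (π / n))⁻¹ := by
      have h1 : 0 < Real.sin (π / n) := by
        apply Real.sin_pos_of_pos_of_lt_pi (div_pos pi_pos hnpos)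
        rw [div_lt_iff₀ hnpos]; nlinarith [pi_pos]
      exact inv_pos.mpr h1
    have hB : 0 < (Real.sin (π / (2 * n)))⁻¹ := by
      have h2n : (0:ℝ) < 2 * n := by linarith
      have h1 : 0 < Real.sin (π / (2 * n)) := by
        apply Real.sin_pos_of_pos_of_lt_pi (div_pos pi_pos h2n)
        rw [div_lt_iff₀ h2n]; nlinarith [pi_pos]
      exact inv_pos.mpr h1
    have hkey := keyL (π * i / n) (π * j / n) (π / (2 * n)) ha hab hd hbd
    rw [hdi, hdj, div_lt_div_iff₀ (mul_pos hB hsad) (mul_pos hB hsbd)]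
    nlinarith [mul_lt_mul_of_pos_left hkey (mul_pos hA hB), mul_pos hA hB]
end

section
/- For integers n ≥ 3 and 0 ≤ i ≤ ⌊n/2⌋ - 2, with h_j = csc(π/(2n))·sin(π(1+2j)/(2n)) and v_j = csc(π/n)·sin(π(j+1)/n), one has (h_{i+1} - 1)/v_{i+1} - (h_i - 1)/v_i = (1 + v_{i+1} - v_i)/(v_i·v_{i+1}) > 0. -/
open Real

theorem sin_key (x t : ℝ) :
    Real.sin (x + 2*t) * Real.sin (x + t) - Real.sin x * Real.sin (x + 3*t)
      = Real.sin t * Real.sin (2*t) := by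
  have e1 := Real.cos_sub_cos t (2*x+3*t)
  rw [show (t+(2*x+3*t))/2 = x+2*t by ring, show (t-(2*x+3*t))/2 = -(x+t) by ring,
    Real.sin_neg] at e1
  have e2 := Real.cos_sub_cos (3*t) (2*x+3*t)
  rw [show (3*t+(2*x+3*t))/2 = x+3*t by ring, show (3*t-(2*x+3*t))/2 = -x by ring,
    Real.sin_neg] at e2
  have e3 := Real.cos_sub_cos t (3*t)
  rw [show (t+3*t)/2 = 2*t by ring, show (t-3*t)/2 = -t by ring, Real.sin_neg] at e3
  nlinarith [e1, e2, e3]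

set_option maxHeartbeats 2000000 in
theorem stmt9 (n i : ℕ) (hn : 3 ≤ n) (hi : i ≤ n / 2 - 2) :
    letI h : ℕ → ℝ := fun j => (Real.sin (π / (2 * n)))⁻¹ * Real.sin (π * (1 + 2 * (j : ℝ)) / (2 * n))
    letI v : ℕ → ℝ := fun j => (Real.sin (π / n))⁻¹ * Real.sin (π * ((j : ℝ) + 1) / n)
    (h (i + 1) - 1) / v (i + 1) - (h i - 1) / v i = (1 + v (i + 1) - v i) / (v i * v (i + 1)) ∧
      (1 + v (i + 1) - v i) / (v i * v (i + 1)) > 0 := by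
  have hn0 : (0:ℝ) < (n:ℝ) := by
    have : 0 < n := by omega
    exact_mod_cast this
  have h2i : (2*i+3 : ℕ) ≤ n := by omega
  have h2iR : (2*(i:ℝ)+3) ≤ (n:ℝ) := by exact_mod_cast h2i
  have hπ := Real.pi_pos
  set t : ℝ := π / (2*n) with hteq
  have ht0 : 0 < t := by positivity
  have hnt : (n:ℝ) * t = π/2 := by rw [hteq]; field_simp
  have hπn : π / (n:ℝ) = 2*t := by rw [hteq]; field_simp
  have ha : π * (1 + 2*(i:ℝ)) / (2*n) = (2*(i:ℝ)+1)*t := by rw [hteq]; field_simp; ring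
  have ha' : π * (1 + 2*((i:ℝ)+1)) / (2*n) = (2*(i:ℝ)+3)*t := by rw [hteq]; field_simp; ring
  have hb : π * ((i:ℝ)+1) / n = (2*(i:ℝ)+2)*t := by rw [hteq]; field_simp
  have hb' : π * (((i:ℝ)+1)+1) / n = (2*(i:ℝ)+4)*t := by rw [hteq]; field_simp; ring
  -- positivity of sines
  have hlt : ∀ k : ℝ, 0 < k → k ≤ 2*(i:ℝ)+4 → 0 < Real.sin (k*t) := by
    intro k hk hk'
    apply Real.sin_pos_of_pos_of_lt_pi (by positivity)
    have : k*t < 2*(n:ℝ)*t := by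
      apply mul_lt_mul_of_pos_right _ ht0
      nlinarith
    calc k*t < 2*(n:ℝ)*t := this
      _ = π := by rw [hteq]; field_simp
  have hs1 : 0 < Real.sin t := by
    have := hlt 1 one_pos (by nlinarith)
    simpa using this
  have hs2 : 0 < Real.sin (2*t) := hlt 2 (by norm_num) (by nlinarith)
  have hA : 0 < Real.sin ((2*(i:ℝ)+1)*t) := hlt _ (by positivity) (by nlinarith)
  have hB : 0 < Real.sin ((2*(i:ℝ)+3)*t) := hlt _ (by positivity) (by nlinarith)
  have hC : 0 < Real.sin ((2*(i:ℝ)+2)*t) := hlt _ (by positivity) (by nlinarith)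
  have hD : 0 < Real.sin ((2*(i:ℝ)+4)*t) := hlt _ (by positivity) (by nlinarith)
  -- key identity
  have key : Real.sin ((2*(i:ℝ)+3)*t) * Real.sin ((2*(i:ℝ)+2)*t)
      - Real.sin ((2*(i:ℝ)+1)*t) * Real.sin ((2*(i:ℝ)+4)*t) = Real.sin t * Real.sin (2*t) := by
    have := sin_key ((2*(i:ℝ)+1)*t) t
    rw [show (2*(i:ℝ)+1)*t + 2*t = (2*(i:ℝ)+3)*t by ring,
      show (2*(i:ℝ)+1)*t + t = (2*(i:ℝ)+2)*t by ring,
      show (2*(i:ℝ)+1)*t + 3*t = (2*(i:ℝ)+4)*t by ring] at this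
    exact this
  -- monotonicity
  have hCD : Real.sin ((2*(i:ℝ)+2)*t) ≤ Real.sin ((2*(i:ℝ)+4)*t) := by
    have hcos : 0 ≤ Real.cos ((2*(i:ℝ)+3)*t) := by
      apply Real.cos_nonneg_of_mem_Icc
      rw [Set.mem_Icc]
      have h1 : (0:ℝ) ≤ (2*(i:ℝ)+3)*t := by positivity
      have h2 : (2*(i:ℝ)+3)*t ≤ (n:ℝ)*t := by
        apply mul_le_mul_of_nonneg_right h2iR (le_of_lt ht0)
      constructor
      · linarith
      · linarith
    have e := Real.sin_sub_sin ((2*(i:ℝ)+4)*t) ((2*(i:ℝ)+2)*t)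
    rw [show ((2*(i:ℝ)+4)*t - (2*(i:ℝ)+2)*t)/2 = t by ring,
      show ((2*(i:ℝ)+4)*t + (2*(i:ℝ)+2)*t)/2 = (2*(i:ℝ)+3)*t by ring] at e
    nlinarith
  -- reduce the goal
  dsimp only
  push_cast
  rw [ha, ha', hb, hb', hπn]
  set sA := Real.sin ((2*(i:ℝ)+1)*t)
  set sB := Real.sin ((2*(i:ℝ)+3)*t)
  set sC := Real.sin ((2*(i:ℝ)+2)*t)
  set sD := Real.sin ((2*(i:ℝ)+4)*t)
  set s1 := Real.sin t
  set s2 := Real.sin (2*t)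
  constructor
  · rw [div_sub_div _ _ (by positivity) (by positivity), div_eq_div_iff (by positivity) (by positivity)]
    field_simp
    linear_combination key
  · apply div_pos
    · have : s2⁻¹ * sC ≤ s2⁻¹ * sD := by
        apply mul_le_mul_of_nonneg_left hCD (by positivity)
      nlinarith [mul_pos (inv_pos.mpr hs2) hC]
    · positivity
end

section
/- For integers n ≥ 3 and 1 ≤ i ≤ ⌈n/2⌉ - 2, with h_j = csc(π/(2n))·sin(π(1+2j)/(2n)) and v_j = csc(π/n)·sin(π(j+1)/n), one has (h_i - 1)/v_{i-1} - (h_{i+1} - 1)/v_i = (1 + v_{i-1} - v_i)/(v_{i-1}·v_i) > 0. -/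
open Real

private lemma aux10 (A B C S p q : ℝ) (hp : p ≠ 0) (hq : q ≠ 0) (hS : S ≠ 0) (hB : B ≠ 0)
    (hK : A * B - C * S = p * q) :
    (p⁻¹ * A - 1) / (q⁻¹ * S) - (p⁻¹ * C - 1) / (q⁻¹ * B) =
      (1 + q⁻¹ * S - q⁻¹ * B) / ((q⁻¹ * S) * (q⁻¹ * B)) := by
  field_simp
  linear_combination hK

private lemma key10 (x a : ℝ) :
    sin (x + a) * sin (x + 2 * a) - sin (x + 3 * a) * sin x = sin a * sin (2 * a) := by
  rw [show x + 2 * a = (x + a) + a by ring, show x + 3 * a = ((x + a) + a) + a by ring]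
  simp only [sin_add, cos_add, sin_two_mul]
  linear_combination (2 * sin a ^ 2 * cos a) * sin_sq_add_cos_sq x

set_option maxHeartbeats 1000000 in
theorem stmt10 (n i : ℕ) (hn : 3 ≤ n) (hi1 : 1 ≤ i) (hi2 : i ≤ (n + 1) / 2 - 2) :
    letI h : ℕ → ℝ := fun j => (Real.sin (π / (2 * n)))⁻¹ * Real.sin (π * (1 + 2 * (j : ℝ)) / (2 * n))
    letI v : ℕ → ℝ := fun j => (Real.sin (π / n))⁻¹ * Real.sin (π * ((j : ℝ) + 1) / n)
    (h i - 1) / v (i - 1) - (h (i + 1) - 1) / v i = (1 + v (i - 1) - v i) / (v (i - 1) * v i) ∧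
      (1 + v (i - 1) - v i) / (v (i - 1) * v i) > 0 := by
  beta_reduce
  have hn5 : 5 ≤ n := by omega
  have h2i : 2 * i + 3 ≤ n := by omega
  have hN : (0:ℝ) < n := by positivity
  have hiR : (1:ℝ) ≤ i := by exact_mod_cast hi1
  have hiN : (i:ℝ) + 1 < n := by
    have := (Nat.cast_le (α := ℝ)).2 h2i
    push_cast at this
    linarith
  have hπ := pi_pos
  have hs1 : 0 < sin (π / (2 * n)) := by
    apply sin_pos_of_pos_of_lt_pi
    · positivity
    · rw [div_lt_iff₀ (by positivity)]
      nlinarith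
  have hs2 : 0 < sin (π / n) := by
    apply sin_pos_of_pos_of_lt_pi
    · positivity
    · rw [div_lt_iff₀ hN]
      nlinarith
  have hcast : ((i - 1 : ℕ) : ℝ) = (i : ℝ) - 1 := by
    push_cast [Nat.cast_sub hi1]
    ring
  rw [hcast]
  push_cast
  set x := π * i / n with hx
  set a := π / (2 * n) with ha
  have e0 : π * ((i:ℝ) - 1 + 1) / n = x := by rw [hx]; ring
  have e1 : π * (1 + 2 * (i:ℝ)) / (2 * n) = x + a := by rw [hx, ha]; field_simp; ring
  have e2 : π * (1 + 2 * ((i:ℝ) + 1)) / (2 * n) = x + 3 * a := by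
    rw [hx, ha]; field_simp; ring
  have e3 : π * ((i:ℝ) + 1) / n = x + 2 * a := by rw [hx, ha]; field_simp
  have e4 : π / n = 2 * a := by rw [ha]; ring
  have hsx : 0 < sin x := by
    apply sin_pos_of_pos_of_lt_pi
    · rw [hx]; positivity
    · rw [hx, div_lt_iff₀ hN]
      nlinarith
  have hsx2 : 0 < sin (x + 2 * a) := by
    rw [← e3]
    apply sin_pos_of_pos_of_lt_pi
    · positivity
    · rw [div_lt_iff₀ hN]
      nlinarith
  have hs2' : sin (π / n) = sin (2 * a) := by rw [e4]
  have hs2a : 0 < sin (2 * a) := by rw [← hs2']; exact hs2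
  have hsa : 0 < sin a := hs1
  have K := key10 x a
  rw [e0, e1, e2, e3, hs2']
  constructor
  · exact aux10 _ _ _ _ _ _ hsa.ne' hs2a.ne' hsx.ne' hsx2.ne' K
  · apply div_pos
    · have hsum : sin (x + 2 * a) = sin x * cos (2 * a) + cos x * sin (2 * a) := by
        rw [show x + 2 * a = x + (2 * a) by ring, sin_add]
      have hc1 : cos (2 * a) < 1 := by
        rw [← e4]
        have := cos_lt_cos_of_nonneg_of_le_pi (x := 0) (y := π / n) le_rfl
          (by rw [div_le_iff₀ hN]; nlinarith) (by positivity)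
        simpa using this
      have hc2 : cos x ≤ 1 := cos_le_one x
      rw [hsum]
      have expand : 1 + (sin (2 * a))⁻¹ * sin x -
          (sin (2 * a))⁻¹ * (sin x * cos (2 * a) + cos x * sin (2 * a)) =
          (sin (2 * a) + sin x - (sin x * cos (2 * a) + cos x * sin (2 * a))) / sin (2 * a) := by
        field_simp
      rw [expand]
      apply div_pos _ hs2a
      nlinarith
    · positivity
end

section
/- For integers n ≥ 3 and 0 ≤ i, with v_j = csc(π/n)·sin(π(j+1)/n), the function i ↦ v_{i+1}/(v_i - 1) is strictly decreasing in i on the range where v_i > 1 (i.e. 1 ≤ i ≤ n/2 - 1); its derivative with respect to i equals -π·sin(π/n)·(1 + cos((2+i)π/n)) / (n·(sin((1+i)π/n) - sin(π/n))²), which is negative. -/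
open Real

theorem aux13 (n : ℕ) (hn : 3 ≤ n) (i : ℝ) (hi : i ∈ Set.Icc (1:ℝ) ((n:ℝ)/2 - 1)) :
    HasDerivAt (fun i : ℝ => ((Real.sin (π / n))⁻¹ * Real.sin (π * (i + 1 + 1) / n)) /
        ((Real.sin (π / n))⁻¹ * Real.sin (π * (i + 1) / n) - 1))
      (-(π * Real.sin (π / n) * (1 + Real.cos ((2 + i) * π / n))) /
        (n * (Real.sin ((1 + i) * π / n) - Real.sin (π / n)) ^ 2)) i ∧
    -(π * Real.sin (π / n) * (1 + Real.cos ((2 + i) * π / n))) /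
        (n * (Real.sin ((1 + i) * π / n) - Real.sin (π / n)) ^ 2) < 0 := by
  obtain ⟨hi1, hi2⟩ := hi
  have hn3 : (3:ℝ) ≤ n := by exact_mod_cast hn
  have hn0 : (0:ℝ) < n := by linarith
  have hπn : 0 < π / n := div_pos pi_pos hn0
  have hπn3 : π / n ≤ π / 3 := by gcongr
  have hs : 0 < Real.sin (π / n) :=
    Real.sin_pos_of_pos_of_lt_pi hπn (by nlinarith [pi_pos])
  have hble : (1 + i) * π / n ≤ π / 2 := by
    have h1 : (1 + i) ≤ (n:ℝ)/2 := by linarith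
    calc (1 + i) * π / n ≤ ((n:ℝ)/2) * π / n := by gcongr
      _ = π / 2 := by field_simp
  have hbgt : π / n < (1 + i) * π / n := by
    have := mul_lt_mul_of_pos_right (show (1:ℝ) < 1 + i by linarith) hπn
    calc π / n = 1 * (π / n) := by ring
      _ < (1 + i) * (π / n) := this
      _ = (1 + i) * π / n := by ring
  have hB : 0 < Real.sin ((1 + i) * π / n) - Real.sin (π / n) := by
    have := Real.strictMonoOn_sin ⟨by linarith, by linarith⟩
      ⟨by nlinarith [pi_pos], hble⟩ hbgt
    linarith
  have hxlt : (2 + i) * π / n < π := by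
    have h1 : (2 + i) ≤ (n:ℝ)/2 + 1 := by linarith
    have h2 : (2 + i) * π / n ≤ ((n:ℝ)/2 + 1) * π / n := by gcongr
    have h3 : ((n:ℝ)/2 + 1) * π / n = π / 2 + π / n := by field_simp
    nlinarith [pi_pos]
  have hxpos : 0 < (2 + i) * π / n := by positivity
  have hcos : 0 < 1 + Real.cos ((2 + i) * π / n) := by
    have hhalf : 0 < Real.cos ((2 + i) * π / n / 2) :=
      Real.cos_pos_of_mem_Ioo ⟨by linarith, by linarith⟩
    have h4 := Real.cos_sq ((2 + i) * π / n / 2)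
    have h5 : 2 * ((2 + i) * π / n / 2) = (2 + i) * π / n := by ring
    rw [h5] at h4
    nlinarith
  have hden : (0:ℝ) < n * (Real.sin ((1 + i) * π / n) - Real.sin (π / n)) ^ 2 :=
    mul_pos hn0 (pow_pos hB 2)
  have hneg : -(π * Real.sin (π / n) * (1 + Real.cos ((2 + i) * π / n))) /
      (n * (Real.sin ((1 + i) * π / n) - Real.sin (π / n)) ^ 2) < 0 :=
    div_neg_of_neg_of_pos (neg_neg_of_pos (mul_pos (mul_pos pi_pos hs) hcos)) hden
  refine ⟨?_, hneg⟩
  have hNarg : HasDerivAt (fun i : ℝ => π * (i + 1 + 1) / n) (π / n) i := by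
    simpa using ((((hasDerivAt_id i).add_const 1).add_const 1).const_mul π).div_const n
  have hDarg : HasDerivAt (fun i : ℝ => π * (i + 1) / n) (π / n) i := by
    simpa using (((hasDerivAt_id i).add_const 1).const_mul π).div_const n
  have hN : HasDerivAt (fun i : ℝ => (Real.sin (π / n))⁻¹ * Real.sin (π * (i + 1 + 1) / n))
      ((Real.sin (π / n))⁻¹ * (Real.cos (π * (i + 1 + 1) / n) * (π / n))) i :=
    (hNarg.sin).const_mul _
  have hD : HasDerivAt (fun i : ℝ => (Real.sin (π / n))⁻¹ * Real.sin (π * (i + 1) / n) - 1)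
      ((Real.sin (π / n))⁻¹ * (Real.cos (π * (i + 1) / n) * (π / n))) i :=
    ((hDarg.sin).const_mul _).sub_const 1
  have hb' : π * (i + 1) / n = (1 + i) * π / n := by ring
  have ha' : π * (i + 1 + 1) / n = (2 + i) * π / n := by ring
  have hD0 : (Real.sin (π / n))⁻¹ * Real.sin (π * (i + 1) / n) - 1 ≠ 0 := by
    rw [hb']
    have : 1 < (Real.sin (π / n))⁻¹ * Real.sin ((1 + i) * π / n) := by
      rw [inv_mul_eq_div, lt_div_iff₀ hs]
      linarith
    linarith
  have hdiv := hN.fun_div hD hD0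
  refine hdiv.congr_deriv ?_
  symm
  simp only [hb', ha']
  have key : Real.sin ((2 + i) * π / n) * Real.cos ((1 + i) * π / n)
      - Real.cos ((2 + i) * π / n) * Real.sin ((1 + i) * π / n) = Real.sin (π / n) := by
    rw [← Real.sin_sub]
    congr 1
    ring
  have hnne : (n:ℝ) ≠ 0 := ne_of_gt hn0
  have hBne : Real.sin ((1 + i) * π / n) - Real.sin (π / n) ≠ 0 := ne_of_gt hB
  set s := Real.sin (π / n) with hsdef
  set sA := Real.sin ((2 + i) * π / n)
  set cA := Real.cos ((2 + i) * π / n)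
  set sB := Real.sin ((1 + i) * π / n)
  set cB := Real.cos ((1 + i) * π / n)
  have hsne : s ≠ 0 := ne_of_gt hs
  have hq : s⁻¹ * sB - 1 ≠ 0 := by
    have : 0 < s⁻¹ * sB - 1 := by
      rw [inv_mul_eq_div, sub_pos, lt_div_iff₀ hs]
      nlinarith
    linarith
  rw [← key] at hsne hq hBne ⊢
  field_simp
  ring

theorem stmt13 (n : ℕ) (hn : 3 ≤ n) :
    letI v : ℝ → ℝ := fun i => (Real.sin (π / n))⁻¹ * Real.sin (π * (i + 1) / n)
    letI f : ℝ → ℝ := fun i => v (i + 1) / (v i - 1)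
    StrictAntiOn f (Set.Icc 1 ((n : ℝ) / 2 - 1)) ∧
    ∀ i ∈ Set.Icc (1 : ℝ) ((n : ℝ) / 2 - 1),
      HasDerivAt f
        (-(π * Real.sin (π / n) * (1 + Real.cos ((2 + i) * π / n))) /
          (n * (Real.sin ((1 + i) * π / n) - Real.sin (π / n)) ^ 2)) i ∧
      -(π * Real.sin (π / n) * (1 + Real.cos ((2 + i) * π / n))) /
          (n * (Real.sin ((1 + i) * π / n) - Real.sin (π / n)) ^ 2) < 0 := by
  constructor
  · apply strictAntiOn_of_deriv_neg (convex_Icc _ _)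
    · intro x hx
      exact (aux13 n hn x hx).1.continuousAt.continuousWithinAt
    · intro x hx
      rw [interior_Icc] at hx
      have h := aux13 n hn x (Set.Ioo_subset_Icc_self hx)
      show deriv (fun i : ℝ => ((Real.sin (π / n))⁻¹ * Real.sin (π * (i + 1 + 1) / n)) /
        ((Real.sin (π / n))⁻¹ * Real.sin (π * (i + 1) / n) - 1)) x < 0
      rw [h.1.deriv]
      exact h.2
  · intro i hi
    exact aux13 n hn i hi
end

section
/- For integers n ≥ 3 and 2 ≤ i, defining h_j = csc(π/(2n))·sin(π(1+2j)/(2n)) and v_j = csc(π/n)·sin(π(j+1)/n), the simultaneity of boundary crossings holds: 4·(h_1 - h_{i-2}/v_{i-2}) = 4·v_{i-1}²·(h_{i-1}/v_{i-1} - h_{i-2}/v_{i-2}) = 4·sin(iπ/n)·csc(π(i-1)/n), valid whenever 3 ≤ i ≤ n-2 so that v_{i-2} > 0 and v_{i-1} > 0. -/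
set_option maxHeartbeats 1600000

open Real

theorem stmt18 (n i : ℕ) (hn : 3 ≤ n) (hi1 : 3 ≤ i) (hi2 : i ≤ n - 2) :
    letI h : ℝ → ℝ := fun j => (Real.sin (π / (2 * n)))⁻¹ * Real.sin (π * (1 + 2 * j) / (2 * n))
    letI v : ℝ → ℝ := fun j => (Real.sin (π / n))⁻¹ * Real.sin (π * (j + 1) / n)
    4 * (h 1 - h ((i : ℝ) - 2) / v ((i : ℝ) - 2)) =
        4 * (v ((i : ℝ) - 1)) ^ 2 *
          (h ((i : ℝ) - 1) / v ((i : ℝ) - 1) - h ((i : ℝ) - 2) / v ((i : ℝ) - 2)) ∧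
      4 * (h 1 - h ((i : ℝ) - 2) / v ((i : ℝ) - 2)) =
        4 * Real.sin ((i : ℝ) * π / n) * (Real.sin (π * ((i : ℝ) - 1) / n))⁻¹ := by
  beta_reduce
  have hn0 : (0:ℝ) < n := by positivity
  have hn3 : (3:ℝ) ≤ n := by exact_mod_cast hn
  have hi3 : (3:ℝ) ≤ (i:ℝ) := by exact_mod_cast hi1
  have hin : (i:ℝ) + 2 ≤ n := by
    have : i + 2 ≤ n := by omega
    exact_mod_cast this
  set s := π / (2 * n) with hs_def
  set b := π * ((i:ℝ) - 1) / n with hb_def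
  -- argument equalities
  have a1 : π * (1 + 2 * (1:ℝ)) / (2 * n) = s + s + s := by
    rw [hs_def]; field_simp; ring
  have a2 : π * (1 + 2 * ((i:ℝ) - 2)) / (2 * n) = b - s := by
    rw [hs_def, hb_def]; field_simp; ring
  have a3 : π * (((i:ℝ) - 2) + 1) / n = b := by
    rw [hb_def]; ring_nf
  have a4 : π * (1 + 2 * ((i:ℝ) - 1)) / (2 * n) = b + s := by
    rw [hs_def, hb_def]; field_simp; ring
  have a5 : π * (((i:ℝ) - 1) + 1) / n = b + (s + s) := by
    rw [hs_def, hb_def]; field_simp; ring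
  have a6 : (i:ℝ) * π / n = b + (s + s) := by
    rw [hs_def, hb_def]; field_simp; ring
  have a7 : π / n = s + s := by rw [hs_def]; field_simp; ring
  -- positivity facts
  have hspos : 0 < Real.sin s := by
    apply Real.sin_pos_of_pos_of_lt_pi
    · rw [hs_def]; positivity
    · rw [hs_def]
      rw [div_lt_iff₀ (by positivity)]
      nlinarith [Real.pi_pos]
  have hslt : s < π / 2 := by
    rw [hs_def, div_lt_div_iff₀ (by positivity) (by norm_num)]
    nlinarith [Real.pi_pos]
  have hcpos : 0 < Real.cos s := Real.cos_pos_of_mem_Ioo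
    ⟨by nlinarith [Real.pi_pos, show (0:ℝ) < s from by rw [hs_def]; positivity], hslt⟩
  have hbpos : 0 < Real.sin b := by
    apply Real.sin_pos_of_pos_of_lt_pi
    · rw [hb_def]; apply div_pos _ hn0; nlinarith [Real.pi_pos]
    · rw [hb_def, div_lt_iff₀ hn0]; nlinarith [Real.pi_pos]
  have hb2pos : 0 < Real.sin (b + (s + s)) := by
    rw [← a6]
    apply Real.sin_pos_of_pos_of_lt_pi
    · apply div_pos _ hn0; nlinarith [Real.pi_pos]
    · rw [div_lt_iff₀ hn0]; nlinarith [Real.pi_pos]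
  simp only [a1, a2, a3, a4, a5, a6, a7]
  -- expand
  have e1 : Real.sin (s + s + s) = Real.sin s * (Real.cos s * Real.cos s)
      + (Real.cos s * Real.cos s - Real.sin s * Real.sin s) * Real.sin s
      + Real.sin s * Real.cos s * Real.cos s := by
    rw [Real.sin_add, Real.sin_add, Real.cos_add]; ring
  have e2 : Real.sin (b - s) = Real.sin b * Real.cos s - Real.cos b * Real.sin s :=
    Real.sin_sub b s
  have e3 : Real.sin (b + s) = Real.sin b * Real.cos s + Real.cos b * Real.sin s :=
    Real.sin_add b s
  have e4 : Real.sin (b + (s + s)) = Real.sin b * (Real.cos s * Real.cos s - Real.sin s * Real.sin s)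
      + Real.cos b * (2 * Real.sin s * Real.cos s) := by
    rw [Real.sin_add b (s+s), Real.sin_add s s, Real.cos_add s s]; ring
  have e5 : Real.sin (s + s) = 2 * Real.sin s * Real.cos s := by
    rw [Real.sin_add]; ring
  have hb2pos' : 0 < Real.sin b * (Real.cos s * Real.cos s - Real.sin s * Real.sin s)
      + Real.cos b * (2 * Real.sin s * Real.cos s) := by rw [← e4]; exact hb2pos
  set S := Real.sin s
  set C := Real.cos s
  set Sb := Real.sin b
  set Cb := Real.cos b
  have hS := Real.sin_sq_add_cos_sq s
  have hB := Real.sin_sq_add_cos_sq b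
  rw [e1, e2, e3, e4, e5]
  constructor
  · have hd : (C ^ 2 - S ^ 2) * Sb + S * C * Cb * 2 ≠ 0 := ne_of_gt (by linarith)
    field_simp
    have hS' : S ^ 2 + C ^ 2 = 1 := hS
    have hB' : Sb ^ 2 + Cb ^ 2 = 1 := hB
    linear_combination ((C ^ 2 - S ^ 2) * Sb + S * C * Cb * 2) * (C * Sb ^ 2 + S * Sb * Cb) * hS' - 2 * ((C ^ 2 - S ^ 2) * Sb + S * C * Cb * 2) * S ^ 2 * C * hB'
  · field_simp
    ring_nf
end
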